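/- Let a and c be natural numbers and let s and t be multisets of positive natural numbers. If X^a · ∏_{b ∈ s}(1 − X^b) = X^c · ∏_{d ∈ t}(1 − X^d) in the polynomial ring ℤ[X], then a = c and s = t. -/
import Mathlib

open Polynomial

private lemma coeff_zero_prod (s : Multiset ℕ) (hs : ∀ b ∈ s, 0 < b) :
    ((s.map (fun b => 1 - (X : ℤ[X]) ^ b)).prod).coeff 0 = 1 := by
  rw [coeff_zero_eq_eval_zero, eval_multiset_prod, Multiset.map_map]
  apply Multiset.prod_eq_one
  intro x hx
  obtain ⟨b, hb, rfl⟩ := Multiset.mem_map.mp hx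
  simp [zero_pow (hs b hb).ne']

private lemma prod_ne_zero (s : Multiset ℕ) (hs : ∀ b ∈ s, 0 < b) :
    ((s.map (fun b => 1 - (X : ℤ[X]) ^ b)).prod) ≠ 0 := by
  intro h0
  have := coeff_zero_prod s hs
  rw [h0] at this
  simp at this

private lemma coeff_prod_min (m : ℕ) (hm : 0 < m) :
    ∀ (s : Multiset ℕ), (∀ b ∈ s, m ≤ b) →
      ((s.map (fun b => 1 - (X : ℤ[X]) ^ b)).prod).coeff m = -(s.count m : ℤ) := by
  intro s
  induction s using Multiset.induction with
  | empty => simp [coeff_one, hm.ne']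
  | cons b s ih =>
    intro hle
    have hb := hle b (Multiset.mem_cons_self b s)
    have hs : ∀ x ∈ s, m ≤ x := fun x hx => hle x (Multiset.mem_cons_of_mem hx)
    have hpos : ∀ x ∈ s, 0 < x := fun x hx => lt_of_lt_of_le hm (hs x hx)
    rw [Multiset.map_cons, Multiset.prod_cons, sub_mul, one_mul, coeff_sub, ih hs,
      mul_comm, coeff_mul_X_pow']
    rcases eq_or_lt_of_le hb with rfl | hlt
    · rw [if_pos le_rfl]
      simp [coeff_zero_prod s hpos, Multiset.count_cons_self]
      ring
    · rw [if_neg (not_le.mpr hlt)]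
      rw [Multiset.count_cons_of_ne (by omega)]
      ring

private lemma prods_eq (n : ℕ) : ∀ (s t : Multiset ℕ), Multiset.card s = n →
    (∀ b ∈ s, 0 < b) → (∀ d ∈ t, 0 < d) →
    (s.map (fun b => 1 - (X : ℤ[X]) ^ b)).prod = (t.map (fun d => 1 - (X : ℤ[X]) ^ d)).prod →
    s = t := by
  induction n with
  | zero =>
    intro s t hcard hs ht h
    have hs0 : s = 0 := Multiset.card_eq_zero.mp hcard
    subst hs0
    by_contra ht0
    have ht0' : t ≠ 0 := fun h' => ht0 h'.symm
    have hne : t.toFinset.Nonempty := by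
      rcases Multiset.exists_mem_of_ne_zero ht0' with ⟨d, hd⟩
      exact ⟨d, Multiset.mem_toFinset.mpr hd⟩
    set m := t.toFinset.min' hne with hmdef
    have hmt : m ∈ t := Multiset.mem_toFinset.mp (t.toFinset.min'_mem hne)
    have hmle : ∀ d ∈ t, m ≤ d := fun d hd => t.toFinset.min'_le d (Multiset.mem_toFinset.mpr hd)
    have hmpos : 0 < m := ht m hmt
    have := coeff_prod_min m hmpos t hmle
    rw [← h] at this
    simp only [Multiset.map_zero, Multiset.prod_zero, coeff_one, hmpos.ne'] at this
    have hcount : 0 < t.count m := Multiset.count_pos.mpr hmt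
    omega
  | succ n ih =>
    intro s t hcard hs ht h
    have hs0 : s ≠ 0 := by
      intro h'; rw [h'] at hcard; simp at hcard
    have ht0 : t ≠ 0 := by
      intro h'
      subst h'
      rcases Multiset.exists_mem_of_ne_zero hs0 with ⟨b, hb⟩
      have hne : s.toFinset.Nonempty := ⟨b, Multiset.mem_toFinset.mpr hb⟩
      set m := s.toFinset.min' hne
      have hms : m ∈ s := Multiset.mem_toFinset.mp (s.toFinset.min'_mem hne)
      have hmle : ∀ d ∈ s, m ≤ d := fun d hd => s.toFinset.min'_le d (Multiset.mem_toFinset.mpr hd)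
      have hmpos : 0 < m := hs m hms
      have := coeff_prod_min m hmpos s hmle
      rw [h] at this
      simp only [Multiset.map_zero, Multiset.prod_zero, coeff_one, hmpos.ne'] at this
      have hcount : 0 < s.count m := Multiset.count_pos.mpr hms
      omega
    have hne : (s + t).toFinset.Nonempty := by
      rcases Multiset.exists_mem_of_ne_zero hs0 with ⟨b, hb⟩
      exact ⟨b, Multiset.mem_toFinset.mpr (Multiset.mem_add.mpr (Or.inl hb))⟩
    set m := (s + t).toFinset.min' hne with hmdef
    have hmst : m ∈ s + t := Multiset.mem_toFinset.mp ((s + t).toFinset.min'_mem hne)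
    have hmle : ∀ d ∈ s + t, m ≤ d :=
      fun d hd => (s + t).toFinset.min'_le d (Multiset.mem_toFinset.mpr hd)
    have hmles : ∀ d ∈ s, m ≤ d := fun d hd => hmle d (Multiset.mem_add.mpr (Or.inl hd))
    have hmlet : ∀ d ∈ t, m ≤ d := fun d hd => hmle d (Multiset.mem_add.mpr (Or.inr hd))
    have hmpos : 0 < m := by
      rcases Multiset.mem_add.mp hmst with hm | hm
      · exact hs m hm
      · exact ht m hm
    have hcs := coeff_prod_min m hmpos s hmles
    have hct := coeff_prod_min m hmpos t hmlet
    rw [h, hct] at hcs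
    have hcounts : s.count m = t.count m := by exact_mod_cast (neg_injective hcs).symm
    have hmboth : m ∈ s ∧ m ∈ t := by
      rcases Multiset.mem_add.mp hmst with hm | hm
      · have : 0 < s.count m := Multiset.count_pos.mpr hm
        exact ⟨hm, Multiset.count_pos.mp (hcounts ▸ this)⟩
      · have : 0 < t.count m := Multiset.count_pos.mpr hm
        exact ⟨Multiset.count_pos.mp (hcounts ▸ this), hm⟩
    obtain ⟨hms, hmt⟩ := hmboth
    have hserase : s = m ::ₘ s.erase m := (Multiset.cons_erase hms).symm
    have hterase : t = m ::ₘ t.erase m := (Multiset.cons_erase hmt).symm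
    rw [hserase, hterase, Multiset.map_cons, Multiset.map_cons, Multiset.prod_cons,
      Multiset.prod_cons] at h
    have hfne : (1 - (X : ℤ[X]) ^ m) ≠ 0 := by
      intro h0
      have := congrArg (eval 0) h0
      simp [zero_pow hmpos.ne'] at this
    have h' := mul_left_cancel₀ hfne h
    have hcard' : Multiset.card (s.erase m) = n := by
      rw [Multiset.card_erase_of_mem hms, hcard]
      rfl
    have := ih (s.erase m) (t.erase m) hcard'
      (fun b hb => hs b (Multiset.mem_of_mem_erase hb))
      (fun d hd => ht d (Multiset.mem_of_mem_erase hd)) h'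
    rw [hserase, hterase, this]

/-- If X^a · ∏_{b ∈ s}(1 − X^b) = X^c · ∏_{d ∈ t}(1 − X^d) in ℤ[X], with s, t
multisets of positive natural numbers, then a = c and s = t. -/
theorem stmt_4 (a c : ℕ) (s t : Multiset ℕ)
    (hs : ∀ b ∈ s, 0 < b) (ht : ∀ d ∈ t, 0 < d)
    (h : (X : ℤ[X]) ^ a * (s.map (fun b => 1 - (X : ℤ[X]) ^ b)).prod =
         (X : ℤ[X]) ^ c * (t.map (fun d => 1 - (X : ℤ[X]) ^ d)).prod) :
    a = c ∧ s = t := by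
  have hPne := prod_ne_zero s hs
  have hQne := prod_ne_zero t ht
  have hXa : ((X : ℤ[X]) ^ a) ≠ 0 := pow_ne_zero _ X_ne_zero
  have hXc : ((X : ℤ[X]) ^ c) ≠ 0 := pow_ne_zero _ X_ne_zero
  have hP0 : natTrailingDegree ((s.map (fun b => 1 - (X : ℤ[X]) ^ b)).prod) = 0 :=
    natTrailingDegree_eq_zero.mpr (Or.inr (by rw [coeff_zero_prod s hs]; norm_num))
  have hQ0 : natTrailingDegree ((t.map (fun d => 1 - (X : ℤ[X]) ^ d)).prod) = 0 :=
    natTrailingDegree_eq_zero.mpr (Or.inr (by rw [coeff_zero_prod t ht]; norm_num))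
  have hac : a = c := by
    have h1 := congrArg natTrailingDegree h
    rw [natTrailingDegree_mul hXa hPne, natTrailingDegree_mul hXc hQne,
      natTrailingDegree_X_pow, natTrailingDegree_X_pow, hP0, hQ0] at h1
    omega
  subst hac
  have h' := mul_left_cancel₀ hXa h
  exact ⟨rfl, prods_eq (Multiset.card s) s t rfl hs ht h'⟩
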